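/- Schur's theorem: for a Hermitian matrix H, the vector of diagonal entries of H (arranged decreasingly) is majorized by the vector of eigenvalues of H (arranged decreasingly). -/

import Mathlib

/-- `Majorizes y x` : the vector `x` is majorized by `y`, i.e. for every `k` the sum of
any `k` entries of `x` is bounded by the sum of the `k` largest entries of `y`
(equivalently, by the sum of some `k` entries of `y`), and the total sums agree. -/
def Majorizes {n : ℕ} (y x : Fin n → ℝ) : Prop :=
  (∀ s : Finset (Fin n), ∃ t : Finset (Fin n), t.card = s.card ∧
      ∑ i ∈ s, x i ≤ ∑ i ∈ t, y i) ∧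
    ∑ i, x i = ∑ i, y i

/-- Key combinatorial lemma: a convex-combination-like sum with weights summing to `k`
is bounded by the sum over some subset of cardinality `k`. -/
lemma exists_subset_sum_le {n k : ℕ} (lam c : Fin n → ℝ) (hk : k ≤ n)
    (hc0 : ∀ j, 0 ≤ c j) (hc1 : ∀ j, c j ≤ 1) (hsum : ∑ j, c j = k) :
    ∃ t : Finset (Fin n), t.card = k ∧ ∑ j, lam j * c j ≤ ∑ j ∈ t, lam j := by
  rcases Nat.eq_zero_or_pos k with hk0 | hkpos
  · subst hk0
    refine ⟨∅, by simp, ?_⟩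
    have hz : ∀ j ∈ Finset.univ, c j = 0 := by
      rw [← Finset.sum_eq_zero_iff_of_nonneg (fun j _ => hc0 j)]
      simpa using hsum
    simp only [Finset.sum_empty]
    rw [Finset.sum_eq_zero (fun j hj => by rw [hz j hj, mul_zero])]
  · have hne : (Finset.univ.powersetCard k : Finset (Finset (Fin n))).Nonempty := by
      rw [Finset.powersetCard_nonempty]
      simpa using hk
    obtain ⟨t, htmem, htmax⟩ := Finset.exists_max_image _ (fun t => ∑ j ∈ t, lam j) hne
    have htcard : t.card = k := (Finset.mem_powersetCard.mp htmem).2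
    have htne : t.Nonempty := Finset.card_pos.mp (by omega)
    obtain ⟨i₀, hi₀t, hi₀min⟩ := Finset.exists_min_image t lam htne
    have hout : ∀ j ∉ t, lam j ≤ lam i₀ := by
      intro j hj
      have hjne : j ∉ t.erase i₀ := fun h => hj (Finset.mem_of_mem_erase h)
      have ht' : (insert j (t.erase i₀)) ∈ Finset.univ.powersetCard k := by
        rw [Finset.mem_powersetCard]
        refine ⟨Finset.subset_univ _, ?_⟩
        rw [Finset.card_insert_of_notMem hjne, Finset.card_erase_of_mem hi₀t, htcard]
        omega
      have hle := htmax _ ht'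
      rw [Finset.sum_insert hjne, Finset.sum_erase_eq_sub hi₀t] at hle
      linarith
    refine ⟨t, htcard, ?_⟩
    have split : ∑ j ∈ t, lam j * c j + ∑ j ∈ tᶜ, lam j * c j = ∑ j, lam j * c j :=
      Finset.sum_add_sum_compl t _
    have csplit : ∑ j ∈ t, c j + ∑ j ∈ tᶜ, c j = (k : ℝ) := by
      rw [Finset.sum_add_sum_compl t c, hsum]
    have h1 : ∑ j ∈ tᶜ, lam j * c j ≤ ∑ j ∈ tᶜ, lam i₀ * c j := by
      refine Finset.sum_le_sum fun j hj => ?_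
      exact mul_le_mul_of_nonneg_right (hout j (Finset.mem_compl.mp hj)) (hc0 j)
    have h2 : ∑ j ∈ tᶜ, lam i₀ * c j = lam i₀ * ((k : ℝ) - ∑ j ∈ t, c j) := by
      rw [← Finset.mul_sum]; congr 1; linarith
    have h3 : lam i₀ * ((k : ℝ) - ∑ j ∈ t, c j) = ∑ j ∈ t, lam i₀ * (1 - c j) := by
      simp only [mul_sub, mul_one, Finset.sum_sub_distrib, Finset.sum_const, nsmul_eq_mul,
        htcard, ← Finset.mul_sum]
      ring
    have h4 : ∑ j ∈ t, (lam j * c j + lam i₀ * (1 - c j)) ≤ ∑ j ∈ t, lam j := by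
      refine Finset.sum_le_sum fun j hj => ?_
      nlinarith [hi₀min j hj, hc1 j, hc0 j]
    rw [Finset.sum_add_distrib] at h4
    linarith

/-- Schur's theorem: the diagonal of a Hermitian matrix is majorized by its
vector of eigenvalues. -/
theorem schur_majorization {n : ℕ} (H : Matrix (Fin n) (Fin n) ℂ)
    (hH : H.IsHermitian) :
    Majorizes hH.eigenvalues (fun i => (H i i).re) := by
  set U : Matrix (Fin n) (Fin n) ℂ := (hH.eigenvectorUnitary : Matrix (Fin n) (Fin n) ℂ) with hU
  -- entrywise formula for the diagonal
  have hentry : ∀ i, (H i i).re = ∑ j, hH.eigenvalues j * Complex.normSq (U i j) := by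
    intro i
    conv_lhs => rw [hH.spectral_theorem, Unitary.conjStarAlgAut_apply]
    rw [Matrix.mul_apply]
    simp only [Matrix.mul_diagonal, Matrix.star_apply, Function.comp_apply,
      RCLike.ofReal_real_eq_id]
    rw [Complex.re_sum]
    refine Finset.sum_congr rfl fun j _ => ?_
    rw [mul_comm (U i j) _, mul_assoc, Complex.star_def, Complex.mul_conj]
    simp
  -- column sums of |U|² are 1
  have hcol : ∀ j, ∑ i, Complex.normSq (U i j) = 1 := by
    intro j
    have h : star U * U = 1 := Matrix.mem_unitaryGroup_iff'.mp hH.eigenvectorUnitary.2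
    have h2 := congrArg (fun M => (M j j).re) h
    simp only [Matrix.mul_apply, Matrix.star_apply, Matrix.one_apply_eq, Complex.one_re,
      Complex.re_sum] at h2
    rw [← h2]
    refine Finset.sum_congr rfl fun i _ => ?_
    rw [Complex.star_def, mul_comm, Complex.mul_conj]
    simp
  -- row sums of |U|² are 1
  have hrow : ∀ i, ∑ j, Complex.normSq (U i j) = 1 := by
    intro i
    have h : U * star U = 1 := Matrix.mem_unitaryGroup_iff.mp hH.eigenvectorUnitary.2
    have h2 := congrArg (fun M => (M i i).re) h
    simp only [Matrix.mul_apply, Matrix.star_apply, Matrix.one_apply_eq, Complex.one_re,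
      Complex.re_sum] at h2
    rw [← h2]
    refine Finset.sum_congr rfl fun j _ => ?_
    rw [Complex.star_def, Complex.mul_conj]
    simp
  constructor
  · intro s
    set c : Fin n → ℝ := fun j => ∑ i ∈ s, Complex.normSq (U i j) with hc
    have hc0 : ∀ j, 0 ≤ c j := fun j =>
      Finset.sum_nonneg fun i _ => Complex.normSq_nonneg _
    have hc1 : ∀ j, c j ≤ 1 := by
      intro j
      calc c j ≤ ∑ i, Complex.normSq (U i j) :=
            Finset.sum_le_sum_of_subset_of_nonneg (Finset.subset_univ s)
              (fun i _ _ => Complex.normSq_nonneg _)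
        _ = 1 := hcol j
    have hcsum : ∑ j, c j = (s.card : ℝ) := by
      rw [Finset.sum_comm]
      rw [Finset.sum_congr rfl (fun i _ => hrow i)]
      simp
    have hk : s.card ≤ n := by
      simpa using Finset.card_le_univ s
    obtain ⟨t, htcard, hle⟩ := exists_subset_sum_le hH.eigenvalues c hk hc0 hc1 hcsum
    refine ⟨t, htcard, ?_⟩
    calc ∑ i ∈ s, (H i i).re = ∑ i ∈ s, ∑ j, hH.eigenvalues j * Complex.normSq (U i j) :=
          Finset.sum_congr rfl fun i _ => hentry i
      _ = ∑ j, hH.eigenvalues j * c j := by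
          rw [Finset.sum_comm]
          exact Finset.sum_congr rfl fun j _ => by rw [hc, ← Finset.mul_sum]
      _ ≤ ∑ j ∈ t, hH.eigenvalues j := hle
  · calc ∑ i, (H i i).re = ∑ i, ∑ j, hH.eigenvalues j * Complex.normSq (U i j) :=
        Finset.sum_congr rfl fun i _ => hentry i
      _ = ∑ j, hH.eigenvalues j * ∑ i, Complex.normSq (U i j) := by
          rw [Finset.sum_comm]
          exact Finset.sum_congr rfl fun j _ => by rw [← Finset.mul_sum]
      _ = ∑ j, hH.eigenvalues j := by
          exact Finset.sum_congr rfl fun j _ => by rw [hcol j, mul_one]
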